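/- Define ψ : ℝ → ℝ by ψ(u) = (td(u) − 1)/u for u ≠ 0 and ψ(0) = −1/2. For all x_1, x_2, t ∈ ℝ, the 2nd Taylor coefficient at ε = 0 of the smooth function ε ↦ td(εx_1) · td(εx_2) · ψ(εt) equals −( e_1(x)² + e_2(x) + e_1(x)·t ) / 24, where e_1(x) = x_1 + x_2 and e_2(x) = x_1 x_2. -/

import Mathlib

noncomputable def td (u : ℝ) : ℝ := if u = 0 then 1 else u / (Real.exp u - 1)

/-- `ψ(u) = (td(u) − 1)/u` for `u ≠ 0`, and `ψ(0) = −1/2`. -/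
noncomputable def psi (u : ℝ) : ℝ := if u = 0 then -1 / 2 else (td u - 1) / u

open Filter Asymptotics FormalMultilinearSeries Topology

namespace KulikovAux

/-! ### The auxiliary entire functions `G` and `H` -/

noncomputable def pg : FormalMultilinearSeries ℝ ℝ ℝ :=
  ofScalars ℝ (fun n => (((n+1).factorial : ℝ))⁻¹)

noncomputable def ph : FormalMultilinearSeries ℝ ℝ ℝ :=
  ofScalars ℝ (fun n => (((n+2).factorial : ℝ))⁻¹)

lemma fact_cast_ne (m : ℕ) : ((m.factorial : ℝ)) ≠ 0 :=
  Nat.cast_ne_zero.mpr m.factorial_ne_zero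

lemma radius_aux (k : ℕ) :
    (ofScalars ℝ (fun n => (((n+k).factorial : ℝ))⁻¹)).radius = ⊤ := by
  apply ofScalars_radius_eq_top_of_tendsto
  · exact Eventually.of_forall fun n => inv_ne_zero (fact_cast_ne _)
  · have h : (fun n : ℕ => ‖(((n+1+k).factorial : ℝ))⁻¹‖ / ‖(((n+k).factorial : ℝ))⁻¹‖)
        = fun n : ℕ => (((n:ℝ)+k+1))⁻¹ := by
      funext n
      rw [Real.norm_eq_abs, Real.norm_eq_abs, abs_of_pos (by positivity),
        abs_of_pos (by positivity)]
      rw [show n+1+k = (n+k)+1 by ring, Nat.factorial_succ]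
      rw [div_eq_iff (by positivity)]
      push_cast
      field_simp
    simp only [Nat.succ_eq_add_one, h]
    apply Tendsto.comp tendsto_inv_atTop_zero
    apply tendsto_atTop_add_const_right
    exact tendsto_atTop_add_const_right _ _ tendsto_natCast_atTop_atTop

lemma pg_radius : pg.radius = ⊤ := radius_aux 1
lemma ph_radius : ph.radius = ⊤ := radius_aux 2

noncomputable def G : ℝ → ℝ := pg.sum
noncomputable def H : ℝ → ℝ := ph.sum

lemma hasG : HasFPowerSeriesOnBall G pg 0 ⊤ := by
  have := pg.hasFPowerSeriesOnBall (by rw [pg_radius]; simp)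
  rwa [pg_radius] at this

lemma hasH : HasFPowerSeriesOnBall H ph 0 ⊤ := by
  have := ph.hasFPowerSeriesOnBall (by rw [ph_radius]; simp)
  rwa [ph_radius] at this

lemma G_tsum (u : ℝ) : G u = ∑' n : ℕ, u ^ n / ((n+1).factorial : ℝ) := by
  rw [G, show pg.sum = ofScalarsSum (fun n => (((n+1).factorial : ℝ))⁻¹) from rfl,
    ofScalars_sum_eq]
  simp [smul_eq_mul, div_eq_inv_mul, mul_comm]

lemma H_tsum (u : ℝ) : H u = ∑' n : ℕ, u ^ n / ((n+2).factorial : ℝ) := by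
  rw [H, show ph.sum = ofScalarsSum (fun n => (((n+2).factorial : ℝ))⁻¹) from rfl,
    ofScalars_sum_eq]
  simp [smul_eq_mul, div_eq_inv_mul, mul_comm]

/-! ### Closed forms -/

lemma exp_tsum (u : ℝ) : Real.exp u = ∑' n : ℕ, u ^ n / (n.factorial : ℝ) := by
  rw [Real.exp_eq_exp_ℝ, NormedSpace.exp_eq_tsum_div]

lemma summable1 (u : ℝ) : Summable (fun n : ℕ => u ^ (n+1) / ((n+1).factorial : ℝ)) :=
  (summable_nat_add_iff 1).mpr (Real.summable_pow_div_factorial u)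

lemma tsum1 (u : ℝ) : ∑' n : ℕ, u ^ (n+1) / ((n+1).factorial : ℝ) = Real.exp u - 1 := by
  rw [exp_tsum, Summable.tsum_eq_zero_add (Real.summable_pow_div_factorial u)]
  norm_num

lemma tsum2 (u : ℝ) : ∑' n : ℕ, u ^ (n+2) / ((n+2).factorial : ℝ) = Real.exp u - 1 - u := by
  rw [← tsum1 u, Summable.tsum_eq_zero_add (summable1 u)]
  norm_num

lemma G_mul (u : ℝ) : u * G u = Real.exp u - 1 := by
  rw [G_tsum, ← tsum_mul_left, ← tsum1 u]
  congr 1; funext n; rw [pow_succ]; ring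

lemma H_mul (u : ℝ) : u ^ 2 * H u = Real.exp u - 1 - u := by
  rw [H_tsum, ← tsum_mul_left, ← tsum2 u]
  congr 1; funext n; rw [pow_add]; ring

lemma G_zero : G 0 = 1 := by
  rw [G_tsum, tsum_eq_single 0 (fun n hn => by simp [zero_pow hn])]; norm_num

lemma H_zero : H 0 = 1/2 := by
  rw [H_tsum, tsum_eq_single 0 (fun n hn => by simp [zero_pow hn])]; norm_num

lemma exp_sub_one_ne {u : ℝ} (hu : u ≠ 0) : Real.exp u - 1 ≠ 0 := by
  rw [sub_ne_zero]
  intro h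
  exact hu (Real.exp_injective (by rw [h, Real.exp_zero]))

lemma G_eq {u : ℝ} (hu : u ≠ 0) : G u = (Real.exp u - 1) / u := by
  rw [eq_div_iff hu, mul_comm, G_mul]

lemma H_eq {u : ℝ} (hu : u ≠ 0) : H u = (Real.exp u - 1 - u) / u ^ 2 := by
  rw [eq_div_iff (pow_ne_zero 2 hu), mul_comm, H_mul]

lemma G_pos (u : ℝ) : 0 < G u := by
  rcases eq_or_ne u 0 with h | h
  · rw [h, G_zero]; norm_num
  · rw [G_eq h]
    rcases h.lt_or_gt with hlt | hgt
    · apply div_pos_of_neg_of_neg _ hlt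
      have : Real.exp u < 1 := by
        rw [← Real.exp_zero]; exact Real.exp_lt_exp.mpr hlt
      linarith
    · apply div_pos _ hgt
      have : 1 < Real.exp u := by
        rw [← Real.exp_zero]; exact Real.exp_lt_exp.mpr hgt
      linarith

lemma G_ne (u : ℝ) : G u ≠ 0 := (G_pos u).ne'

lemma td_eq (u : ℝ) : td u = (G u)⁻¹ := by
  rcases eq_or_ne u 0 with h | h
  · rw [h, G_zero]; simp [td]
  · rw [td, if_neg h, G_eq h, inv_div]

lemma psi_eq (u : ℝ) : psi u = -H u * (G u)⁻¹ := by
  rcases eq_or_ne u 0 with h | h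
  · rw [h, G_zero, H_zero]; simp [psi]; norm_num
  · rw [psi, if_neg h, td_eq, G_eq h, H_eq h, inv_div]
    field_simp [exp_sub_one_ne h]
    ring

/-! ### Analyticity -/

lemma aG : AnalyticAt ℝ G 0 := hasG.hasFPowerSeriesAt.analyticAt
lemma aH : AnalyticAt ℝ H 0 := hasH.hasFPowerSeriesAt.analyticAt

lemma G_zero_ne : G 0 ≠ 0 := G_ne 0

lemma aTd : AnalyticAt ℝ td 0 := by
  have h : td = fun u => (G u)⁻¹ := funext td_eq
  rw [h]
  exact aG.inv G_zero_ne

lemma aPsi : AnalyticAt ℝ psi 0 := by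
  have h : psi = fun u => -H u * (G u)⁻¹ := funext psi_eq
  rw [h]
  exact aH.neg.mul (aG.inv G_zero_ne)

lemma contGinv : ContinuousAt (fun u : ℝ => (G u)⁻¹) 0 :=
  aG.continuousAt.inv₀ G_zero_ne

/-! ### Big-O machinery -/

lemma bigO_one_of_continuousAt {φ : ℝ → ℝ} (h : ContinuousAt φ 0) :
    φ =O[𝓝 (0:ℝ)] fun _ => (1:ℝ) :=
  h.tendsto.isBigO_one ℝ

lemma bigO_cube_mul {φ : ℝ → ℝ} (h : ContinuousAt φ 0) :
    (fun u : ℝ => u ^ 3 * φ u) =O[𝓝 (0:ℝ)] fun u => u ^ 3 := by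
  have := (isBigO_refl (fun u : ℝ => u ^ 3) (𝓝 0)).mul (bigO_one_of_continuousAt h)
  simpa using this

lemma comp_linear {F : ℝ → ℝ} (h : F =O[𝓝 (0:ℝ)] fun u => u ^ 3) (x : ℝ) :
    (fun ε : ℝ => F (ε * x)) =O[𝓝 (0:ℝ)] fun ε => ε ^ 3 := by
  have ht : Tendsto (fun ε : ℝ => ε * x) (𝓝 0) (𝓝 0) :=
    (continuous_id.mul continuous_const).tendsto' 0 0 (zero_mul x)
  have h2 := h.comp_tendsto ht
  refine h2.trans ?_
  have h3 : ((fun u : ℝ => u ^ 3) ∘ fun ε : ℝ => ε * x) = fun ε => x ^ 3 * ε ^ 3 := by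
    funext ε; simp [Function.comp]; ring
  rw [h3]
  exact (isBigO_refl (fun ε : ℝ => ε ^ 3) _).const_mul_left _

lemma coeff_zero_of_bigO {φ : ℝ → ℝ} {k : ℕ} (hc : ContinuousAt φ 0)
    (h : (fun ε : ℝ => ε ^ k * φ ε) =O[𝓝 (0:ℝ)] fun ε => ε ^ (k + 1)) : φ 0 = 0 := by
  have h' : φ =O[𝓝[≠] (0:ℝ)] fun ε => ε := by
    rw [isBigO_iff] at h
    obtain ⟨C, hC⟩ := h
    rw [isBigO_iff]
    refine ⟨C, ?_⟩
    filter_upwards [nhdsWithin_le_nhds hC, self_mem_nhdsWithin] with ε h1 h2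
    replace h2 : ε ≠ 0 := h2
    have hpow : (0:ℝ) < ‖ε‖ ^ k := pow_pos (norm_pos_iff.mpr h2) k
    rw [norm_mul, norm_pow, pow_succ, norm_mul, norm_pow] at h1
    have h1' : ‖ε‖ ^ k * ‖φ ε‖ ≤ ‖ε‖ ^ k * (C * ‖ε‖) := by nlinarith
    exact le_of_mul_le_mul_left h1' hpow
  have htend : Tendsto φ (𝓝[≠] (0:ℝ)) (𝓝 0) :=
    h'.trans_tendsto (tendsto_nhdsWithin_of_tendsto_nhds tendsto_id)
  exact tendsto_nhds_unique (tendsto_nhdsWithin_of_tendsto_nhds hc.tendsto) htend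

lemma pow_bigO_succ {k : ℕ} : (fun ε : ℝ => ε ^ (k+1)) =O[𝓝 (0:ℝ)] fun ε => ε ^ k := by
  have := (bigO_one_of_continuousAt (continuous_id.continuousAt (x := (0:ℝ)))).mul
    (isBigO_refl (fun ε : ℝ => ε ^ k) (𝓝 0))
  simpa [pow_succ, mul_comm] using this

lemma quad_coeffs_zero {a b c : ℝ}
    (h : (fun ε : ℝ => a + b * ε + c * ε ^ 2) =O[𝓝 (0:ℝ)] fun ε => ε ^ 3) :
    a = 0 ∧ b = 0 ∧ c = 0 := by
  have ha : a = 0 := by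
    have h0 : (fun ε : ℝ => ε ^ 0 * (a + b * ε + c * ε ^ 2)) =O[𝓝 (0:ℝ)] fun ε => ε ^ 1 := by
      simpa using h.trans (pow_bigO_succ (k := 2)) |>.trans (pow_bigO_succ (k := 1))
    simpa using coeff_zero_of_bigO (by fun_prop) h0
  subst ha
  have hb : b = 0 := by
    have h1 : (fun ε : ℝ => ε ^ 1 * (b + c * ε)) =O[𝓝 (0:ℝ)] fun ε => ε ^ 2 := by
      have heq : (fun ε : ℝ => ε ^ 1 * (b + c * ε)) = fun ε : ℝ => 0 + b * ε + c * ε ^ 2 := by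
        funext ε; ring
      rw [heq]
      simpa using h.trans (pow_bigO_succ (k := 2))
    simpa using coeff_zero_of_bigO (by fun_prop) h1
  subst hb
  refine ⟨rfl, rfl, ?_⟩
  have h2 : (fun ε : ℝ => ε ^ 2 * c) =O[𝓝 (0:ℝ)] fun ε => ε ^ 3 := by
    have heq : (fun ε : ℝ => ε ^ 2 * c) = fun ε : ℝ => 0 + 0 * ε + c * ε ^ 2 := by
      funext ε; ring
    rw [heq]; exact h
  simpa using coeff_zero_of_bigO (by fun_prop) h2

/-! ### Taylor approximations of the factors -/

lemma pg_partialSum (y : ℝ) : pg.partialSum 3 y = 1 + y / 2 + y ^ 2 / 6 := by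
  have hap : ∀ (k : ℕ), (pg k fun _ => y) = (((k+1).factorial : ℝ))⁻¹ * y ^ k := by
    intro k
    rw [pg, ofScalars_apply_eq, smul_eq_mul]
  rw [FormalMultilinearSeries.partialSum]
  rw [Finset.sum_range_succ, Finset.sum_range_succ, Finset.sum_range_one, hap, hap, hap]
  norm_num [Nat.factorial]
  ring

lemma ph_partialSum (y : ℝ) : ph.partialSum 3 y = 1/2 + y / 6 + y ^ 2 / 24 := by
  have hap : ∀ (k : ℕ), (ph k fun _ => y) = (((k+2).factorial : ℝ))⁻¹ * y ^ k := by
    intro k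
    rw [ph, ofScalars_apply_eq, smul_eq_mul]
  rw [FormalMultilinearSeries.partialSum]
  rw [Finset.sum_range_succ, Finset.sum_range_succ, Finset.sum_range_one, hap, hap, hap]
  norm_num [Nat.factorial]
  ring

lemma G_approx : (fun u : ℝ => G u - (1 + u / 2 + u ^ 2 / 6)) =O[𝓝 (0:ℝ)] fun u => u ^ 3 := by
  have h := hasG.hasFPowerSeriesAt.isBigO_sub_partialSum_pow 3
  simp only [zero_add, pg_partialSum] at h
  have h2 : (fun y : ℝ => ‖y‖ ^ 3) = fun y : ℝ => ‖y ^ 3‖ := by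
    funext y; rw [norm_pow]
  rw [h2] at h
  exact h.of_norm_right

lemma H_approx : (fun u : ℝ => H u - (1/2 + u / 6 + u ^ 2 / 24)) =O[𝓝 (0:ℝ)] fun u => u ^ 3 := by
  have h := hasH.hasFPowerSeriesAt.isBigO_sub_partialSum_pow 3
  simp only [zero_add, ph_partialSum] at h
  have h2 : (fun y : ℝ => ‖y‖ ^ 3) = fun y : ℝ => ‖y ^ 3‖ := by
    funext y; rw [norm_pow]
  rw [h2] at h
  exact h.of_norm_right

lemma td_approx :
    (fun u : ℝ => td u - (1 - u / 2 + u ^ 2 / 12)) =O[𝓝 (0:ℝ)] fun u => u ^ 3 := by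
  have key : (fun u : ℝ => td u - (1 - u / 2 + u ^ 2 / 12)) =
      fun u => (1 - (1 - u / 2 + u ^ 2 / 12) * G u) * (G u)⁻¹ := by
    funext u
    rw [td_eq]
    field_simp [G_ne u]
  rw [key]
  have h1 : (fun u : ℝ => 1 - (1 - u / 2 + u ^ 2 / 12) * G u) =O[𝓝 (0:ℝ)] fun u => u ^ 3 := by
    have decomp : (fun u : ℝ => 1 - (1 - u / 2 + u ^ 2 / 12) * G u)
        = fun u => (u ^ 3 * (1/24 - u/72))
            - (1 - u / 2 + u ^ 2 / 12) * (G u - (1 + u / 2 + u ^ 2 / 6)) := by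
      funext u; ring
    rw [decomp]
    apply IsBigO.sub
    · exact bigO_cube_mul (by fun_prop)
    · have := (bigO_one_of_continuousAt
        (φ := fun u : ℝ => 1 - u / 2 + u ^ 2 / 12) (by fun_prop)).mul G_approx
      simpa using this
  have := h1.mul (bigO_one_of_continuousAt contGinv)
  simpa using this

lemma psi_approx :
    (fun u : ℝ => psi u - (-(1/2) + u / 12)) =O[𝓝 (0:ℝ)] fun u => u ^ 3 := by
  have key : (fun u : ℝ => psi u - (-(1/2) + u / 12)) =
      fun u => (-H u - (-(1/2) + u / 12) * G u) * (G u)⁻¹ := by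
    funext u
    rw [psi_eq]
    field_simp [G_ne u]
  rw [key]
  have h1 : (fun u : ℝ => -H u - (-(1/2) + u / 12) * G u) =O[𝓝 (0:ℝ)] fun u => u ^ 3 := by
    have decomp : (fun u : ℝ => -H u - (-(1/2) + u / 12) * G u)
        = fun u => (u ^ 3 * (-(1/72)))
            - (H u - (1/2 + u / 6 + u ^ 2 / 24))
            - (-(1/2) + u / 12) * (G u - (1 + u / 2 + u ^ 2 / 6)) := by
      funext u; ring
    rw [decomp]
    apply IsBigO.sub
    apply IsBigO.sub
    · exact bigO_cube_mul (by fun_prop)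
    · exact H_approx
    · have := (bigO_one_of_continuousAt
        (φ := fun u : ℝ => -(1/2) + u / 12) (by fun_prop)).mul G_approx
      simpa using this
  have := h1.mul (bigO_one_of_continuousAt contGinv)
  simpa using this

end KulikovAux

open KulikovAux in
/-- Chern-root form of the Kulikov surface computation
(Theorem 3.18).  The second Taylor coefficient at 0 of
`ε ↦ td(ε x₁)·td(ε x₂)·ψ(ε t)` equals `−(e₁(x)² + e₂(x) + e₁(x)·t)/24`
with `e₁(x) = x₁ + x₂`, `e₂(x) = x₁ x₂`. -/
theorem kulikov_surface_taylor (x₁ x₂ t : ℝ) :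
    iteratedDeriv 2 (fun ε : ℝ => td (ε * x₁) * td (ε * x₂) * psi (ε * t)) 0
        / (Nat.factorial 2 : ℝ)
      = -(((x₁ + x₂) ^ 2 + x₁ * x₂ + (x₁ + x₂) * t) / 24) := by
  set f : ℝ → ℝ := fun ε => td (ε * x₁) * td (ε * x₂) * psi (ε * t) with hfdef
  have lin : ∀ x : ℝ, AnalyticAt ℝ (fun ε : ℝ => ε * x) 0 :=
    fun x => analyticAt_id.mul analyticAt_const
  have afac : ∀ x : ℝ, AnalyticAt ℝ (fun ε : ℝ => td (ε * x)) 0 := by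
    intro x
    have h0 : AnalyticAt ℝ td ((fun ε : ℝ => ε * x) 0) := by
      show AnalyticAt ℝ td (0 * x)
      rw [zero_mul]; exact aTd
    exact AnalyticAt.comp (g := td) (f := fun ε : ℝ => ε * x) h0 (lin x)
  have apfac : AnalyticAt ℝ (fun ε : ℝ => psi (ε * t)) 0 := by
    have h0 : AnalyticAt ℝ psi ((fun ε : ℝ => ε * t) 0) := by
      show AnalyticAt ℝ psi (0 * t)
      rw [zero_mul]; exact aPsi
    exact AnalyticAt.comp (g := psi) (f := fun ε : ℝ => ε * t) h0 (lin t)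
  have af : AnalyticAt ℝ f 0 := ((afac x₁).mul (afac x₂)).mul apfac
  obtain ⟨pf, hpf⟩ := af
  obtain ⟨rf, hf⟩ := hpf
  have hps : ∀ ε : ℝ, pf.partialSum 3 ε
      = pf.coeff 0 + pf.coeff 1 * ε + pf.coeff 2 * ε ^ 2 := by
    intro ε
    rw [FormalMultilinearSeries.partialSum, Finset.sum_range_succ, Finset.sum_range_succ,
      Finset.sum_range_one, FormalMultilinearSeries.apply_eq_pow_smul_coeff,
      FormalMultilinearSeries.apply_eq_pow_smul_coeff,
      FormalMultilinearSeries.apply_eq_pow_smul_coeff]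
    simp only [smul_eq_mul]
    ring
  have hser : (fun ε : ℝ => f ε - (pf.coeff 0 + pf.coeff 1 * ε + pf.coeff 2 * ε ^ 2))
      =O[𝓝 (0:ℝ)] fun ε => ε ^ 3 := by
    have h := hf.hasFPowerSeriesAt.isBigO_sub_partialSum_pow 3
    simp only [zero_add] at h
    have h2 : (fun y : ℝ => ‖y‖ ^ 3) = fun y : ℝ => ‖y ^ 3‖ := by
      funext y; rw [norm_pow]
    rw [h2] at h
    have h3 := h.of_norm_right
    have heq : (fun y : ℝ => f y - pf.partialSum 3 y)
        = fun ε : ℝ => f ε - (pf.coeff 0 + pf.coeff 1 * ε + pf.coeff 2 * ε ^ 2) := by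
      funext y; rw [hps]
    rwa [heq] at h3
  have e1 := comp_linear td_approx x₁
  have e2 := comp_linear td_approx x₂
  have e3 := comp_linear psi_approx t
  have b1 : (fun ε : ℝ => td (ε * x₂)) =O[𝓝 (0:ℝ)] fun _ => (1:ℝ) :=
    bigO_one_of_continuousAt (afac x₂).continuousAt
  have b3 : (fun ε : ℝ => psi (ε * t)) =O[𝓝 (0:ℝ)] fun _ => (1:ℝ) :=
    bigO_one_of_continuousAt apfac.continuousAt
  have bP1 : (fun ε : ℝ => 1 - (ε * x₁)/2 + (ε * x₁)^2/12) =O[𝓝 (0:ℝ)] fun _ => (1:ℝ) :=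
    bigO_one_of_continuousAt (by fun_prop)
  have bP2 : (fun ε : ℝ => 1 - (ε * x₂)/2 + (ε * x₂)^2/12) =O[𝓝 (0:ℝ)] fun _ => (1:ℝ) :=
    bigO_one_of_continuousAt (by fun_prop)
  have hexp : (fun ε : ℝ => f ε - ((-(1/2) : ℝ) + (x₁/4 + x₂/4 + t/12) * ε + (-(((x₁ + x₂)^2 + x₁*x₂ + (x₁+x₂)*t)/24)) * ε ^ 2)) =O[𝓝 (0:ℝ)] fun ε => ε ^ 3 := by
    have hsum : (fun ε : ℝ => f ε - ((-(1/2) : ℝ) + (x₁/4 + x₂/4 + t/12) * ε + (-(((x₁ + x₂)^2 + x₁*x₂ + (x₁+x₂)*t)/24)) * ε ^ 2))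
        = fun ε : ℝ =>
          (((td (ε*x₁) - (1 - (ε*x₁)/2 + (ε*x₁)^2/12)) * td (ε*x₂) * psi (ε*t)
          + (1 - (ε*x₁)/2 + (ε*x₁)^2/12) * (td (ε*x₂) - (1 - (ε*x₂)/2 + (ε*x₂)^2/12)) * psi (ε*t))
          + (1 - (ε*x₁)/2 + (ε*x₁)^2/12) * (1 - (ε*x₂)/2 + (ε*x₂)^2/12)
              * (psi (ε*t) - (-(1/2) + (ε*t)/12)))
          + ε ^ 3 * (x₁^2*x₂/48 + x₁*x₂^2/48 + x₁*x₂*t/48 + x₁^2*t/144 + x₂^2*t/144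
              + ε * (-(x₁*x₂^2*t + x₁^2*x₂*t + x₁^2*x₂^2)/288)
              + ε^2 * (x₁^2*x₂^2*t/1728)) := by
      funext ε
      simp only [hfdef]
      ring
    rw [hsum]
    apply IsBigO.add
    apply IsBigO.add
    apply IsBigO.add
    · simpa using (e1.mul b1).mul b3
    · simpa using (bP1.mul e2).mul b3
    · simpa using (bP1.mul bP2).mul e3
    · exact bigO_cube_mul (by fun_prop)
  have hdiff : (fun ε : ℝ => (pf.coeff 0 - (-(1/2) : ℝ)) + (pf.coeff 1 - (x₁/4 + x₂/4 + t/12)) * ε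
      + (pf.coeff 2 - (-(((x₁ + x₂)^2 + x₁*x₂ + (x₁+x₂)*t)/24))) * ε ^ 2) =O[𝓝 (0:ℝ)] fun ε => ε ^ 3 := by
    have h := hexp.sub hser
    have heq : (fun ε : ℝ => (f ε - ((-(1/2) : ℝ) + (x₁/4 + x₂/4 + t/12) * ε + (-(((x₁ + x₂)^2 + x₁*x₂ + (x₁+x₂)*t)/24)) * ε ^ 2))
          - (f ε - (pf.coeff 0 + pf.coeff 1 * ε + pf.coeff 2 * ε ^ 2)))
        = fun ε : ℝ => (pf.coeff 0 - (-(1/2) : ℝ)) + (pf.coeff 1 - (x₁/4 + x₂/4 + t/12)) * ε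
          + (pf.coeff 2 - (-(((x₁ + x₂)^2 + x₁*x₂ + (x₁+x₂)*t)/24))) * ε ^ 2 := by
      funext ε; ring
    rwa [heq] at h
  obtain ⟨h0c, h1c, h2c⟩ := quad_coeffs_zero hdiff
  have hc2 : pf.coeff 2 = -(((x₁ + x₂)^2 + x₁*x₂ + (x₁+x₂)*t)/24) := sub_eq_zero.mp h2c
  have hiter : iteratedDeriv 2 f 0 = (2 : ℝ) * pf.coeff 2 := by
    have h := hf.factorial_smul (1:ℝ) 2
    rw [iteratedDeriv_eq_iteratedFDeriv, ← h]
    have happ : (pf 2 fun _ => (1:ℝ)) = pf.coeff 2 := by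
      rw [FormalMultilinearSeries.apply_eq_pow_smul_coeff]
      simp
    rw [happ]
    simp [Nat.factorial]
  rw [hiter, hc2]
  norm_num [Nat.factorial]
  ring
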